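/- For a ∈ (0,1), the sequence z_n defined by z₀ = 0, z₁ = c ≠ 0, and the recurrence n(z_{n+1} − z_n)(z_n − z_{n−1})/(z_{n+1} − z_{n−1}) = a z_n satisfies the explicit formulas z_{2n} = (∏_{k=1}^{n−1} (k+a)/(k−a)) · (n/(n−a)) · c and z_{2n+1} = (∏_{k=1}^{n} (k+a)/(k−a)) · c, for all n ≥ 1. -/

import Mathlib

/-- Explicit solution of the recurrence
`n(z_{n+1} − z_n)(z_n − z_{n−1}) = a z_n (z_{n+1} − z_{n−1})` defining the discrete power
function `z^{2a}` along a coordinate semi-axis: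
`z_{2n} = (∏_{k=1}^{n−1} (k+a)/(k−a)) · (n/(n−a)) · c` and
`z_{2n+1} = (∏_{k=1}^{n} (k+a)/(k−a)) · c` for `n ≥ 1`. -/
theorem discrete_power_z_axis_values
    (a : ℝ) (ha : 0 < a) (ha' : a < 1) (c : ℂ) (hc : c ≠ 0) (z : ℕ → ℂ)
    (h0 : z 0 = 0) (h1 : z 1 = c)
    (hrec : ∀ n : ℕ, 1 ≤ n →
      (n : ℂ) * (z (n + 1) - z n) * (z n - z (n - 1)) =
        (a : ℂ) * z n * (z (n + 1) - z (n - 1))) :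
    ∀ n : ℕ, 1 ≤ n →
      z (2 * n) = (∏ k ∈ Finset.Icc 1 (n - 1), (((k : ℂ) + a) / ((k : ℂ) - a))) *
          ((n : ℂ) / ((n : ℂ) - a)) * c ∧
      z (2 * n + 1) = (∏ k ∈ Finset.Icc 1 n, (((k : ℂ) + a) / ((k : ℂ) - a))) * c := by
  have hsub : ∀ k : ℕ, 1 ≤ k → ((k : ℂ) - (a : ℂ)) ≠ 0 := by
    intro k hk
    have hk1 : (1:ℝ) ≤ (k:ℝ) := by exact_mod_cast hk
    have h : ((k:ℝ) - a) ≠ 0 := by nlinarith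
    have := Complex.ofReal_ne_zero.mpr h
    push_cast at this
    exact this
  have hadd : ∀ k : ℕ, 1 ≤ k → ((k : ℂ) + (a : ℂ)) ≠ 0 := by
    intro k hk
    have hk1 : (1:ℝ) ≤ (k:ℝ) := by exact_mod_cast hk
    have h : ((k:ℝ) + a) ≠ 0 := by nlinarith
    have := Complex.ofReal_ne_zero.mpr h
    push_cast at this
    exact this
  have ha0 : ((a:ℂ)) ≠ 0 := by
    simpa using Complex.ofReal_ne_zero.mpr (ne_of_gt ha)
  have hPne : ∀ N : ℕ, (∏ k ∈ Finset.Icc 1 N, (((k : ℂ) + a) / ((k : ℂ) - a))) ≠ 0 := by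
    intro N
    refine Finset.prod_ne_zero_iff.mpr ?_
    intro k hk
    have hk1 : 1 ≤ k := (Finset.mem_Icc.mp hk).1
    exact div_ne_zero (hadd k hk1) (hsub k hk1)
  intro n hn
  induction n, hn using Nat.le_induction with
  | base =>
    have H1 := hrec 1 le_rfl
    norm_num [h0, h1] at H1
    have h2 : z 2 * (1 - (a:ℂ)) = c := by
      have key : c * (z 2 * (1 - (a:ℂ)) - c) = 0 := by linear_combination H1
      rcases mul_eq_zero.mp key with h | h
      · exact absurd h hc
      · exact sub_eq_zero.mp h
    have hd1 : (1:ℂ) - a ≠ 0 := by simpa using hsub 1 le_rfl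
    have hz2ne : z 2 ≠ 0 := by
      intro h
      rw [h, zero_mul] at h2
      exact hc h2.symm
    have H2 := hrec 2 (by omega)
    norm_num [h1] at H2
    -- H2 : 2 * (z 3 - z 2) * (z 2 - c) = a * z 2 * (z 3 - c)
    have h2' : z 2 - c = (a:ℂ) * z 2 := by linear_combination h2
    rw [h2'] at H2
    have key3 : ((a:ℂ) * z 2) * (z 3 - (2 * z 2 - c)) = 0 := by linear_combination H2
    have h3 : z 3 = 2 * z 2 - c := by
      rcases mul_eq_zero.mp key3 with h | h
      · exact absurd h (mul_ne_zero ha0 hz2ne)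
      · exact sub_eq_zero.mp h
    constructor
    · show z 2 = _
      rw [Finset.Icc_eq_empty (by omega), Finset.prod_empty]
      push_cast
      field_simp
      linear_combination h2
    · show z 3 = _
      rw [Finset.Icc_self, Finset.prod_singleton]
      push_cast
      rw [h3]
      field_simp
      linear_combination 2 * h2
  | succ m hm ih =>
    obtain ⟨hE, hO⟩ := ih
    have hd1 : ((m:ℂ) - a) ≠ 0 := hsub m hm
    have hd2 : ((m:ℂ) + 1 - a) ≠ 0 := by
      have := hsub (m+1) (by omega); push_cast at this; convert this using 2
    have hn1 : ((m:ℂ) + a) ≠ 0 := hadd m hm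
    have hn2 : ((m:ℂ) + 1 + a) ≠ 0 := by
      have := hadd (m+1) (by omega); push_cast at this; convert this using 2
    set P := (∏ k ∈ Finset.Icc 1 (m-1), (((k : ℂ) + a) / ((k : ℂ) - a))) with hPdef
    have hP : P ≠ 0 := hPne (m-1)
    have hQ : (∏ k ∈ Finset.Icc 1 m, (((k : ℂ) + a) / ((k : ℂ) - a)))
        = P * (((m:ℂ)+a)/((m:ℂ)-a)) := by
      have h : m - 1 + 1 = m := by omega
      conv_lhs => rw [← h]
      rw [Finset.prod_Icc_succ_top (by omega), h]
    rw [hQ] at hO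
    -- first half-step: z (2m+2)
    have H := hrec (2*m+1) (by omega)
    have e1 : 2*m+1-1 = 2*m := by omega
    rw [e1] at H
    push_cast at H
    rw [hO, hE] at H
    have key : (z (2*m+1+1) * (((m:ℂ)-a) * ((m:ℂ)+1-a)) - P*((m:ℂ)+a)*((m:ℂ)+1)*c) * ((a:ℂ)*P*c) = 0 := by
      field_simp at H
      linear_combination (P*c) * H
    have e12 : 2*m+1+1 = 2*m+2 := by omega
    rw [e12] at key
    have hw2 : z (2*m+2) = P * (((m:ℂ)+a)/((m:ℂ)-a)) * (((m:ℂ)+1)/((m:ℂ)+1-a)) * c := by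
      rcases mul_eq_zero.mp key with h | h
      · have h' := sub_eq_zero.mp h
        field_simp
        linear_combination h'
      · exact absurd h (mul_ne_zero (mul_ne_zero ha0 hP) hc)
    -- second half-step: z (2m+3)
    have H2 := hrec (2*m+2) (by omega)
    have e2 : 2*m+2-1 = 2*m+1 := by omega
    rw [e2] at H2
    push_cast at H2
    rw [hw2, hO] at H2
    have hm1 : ((m:ℂ)+1) ≠ 0 := by
      have : ((m+1:ℕ):ℂ) ≠ 0 := Nat.cast_ne_zero.mpr (by omega)
      push_cast at this; exact this
    have key2 : (z (2*m+2+1) * (((m:ℂ)-a) * ((m:ℂ)+1-a)) - P*((m:ℂ)+a)*((m:ℂ)+1+a)*c) * ((a:ℂ)*P*c*((m:ℂ)+a)*((m:ℂ)+1)*(((m:ℂ)-a)^3*((m:ℂ)+1-a))) = 0 := by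
      field_simp at H2
      linear_combination (P*c*((m:ℂ)+a)*((m:ℂ)+1)*(((m:ℂ)-a)^3*((m:ℂ)+1-a))) * H2
    have hw3 : z (2*m+2+1) = P * (((m:ℂ)+a)/((m:ℂ)-a)) * (((m:ℂ)+1+a)/((m:ℂ)+1-a)) * c := by
      rcases mul_eq_zero.mp key2 with h | h
      · have h' := sub_eq_zero.mp h
        field_simp
        linear_combination h'
      · exact absurd h (by
          exact mul_ne_zero (mul_ne_zero (mul_ne_zero (mul_ne_zero (mul_ne_zero ha0 hP) hc) hn1) hm1)
            (mul_ne_zero (pow_ne_zero 3 hd1) hd2))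
    have hR : (∏ k ∈ Finset.Icc 1 (m+1), (((k : ℂ) + a) / ((k : ℂ) - a)))
        = P * (((m:ℂ)+a)/((m:ℂ)-a)) * ((((m:ℂ)+1)+a)/(((m:ℂ)+1)-a)) := by
      rw [Finset.prod_Icc_succ_top (by omega), hQ]
      push_cast
      ring
    constructor
    · have e3 : 2*(m+1) = 2*m+2 := by omega
      rw [e3, hw2, Nat.add_sub_cancel, hQ]
      push_cast
      ring
    · have e4 : 2*(m+1)+1 = 2*m+2+1 := by omega
      rw [e4, hw3, hR]
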